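/- Let p be a prime and let Ω₂ = 𝔽_p[[T,U]]. For a, b ∈ ℤ_p not both divisible by p, let Υ_{a,b} = (1+T)^a(1+U)^b − 1 ∈ Ω₂, where (1+T)^a denotes the binomial power series. If (a,b) and (c,d) represent distinct classes in ℙ¹(ℤ_p) (i.e., ad − bc is nonzero, equivalently there is no unit t ∈ ℤ_p^× with (a,b) = (tc,td)), then Υ_{a,b} and Υ_{c,d} are relatively prime elements of the unique factorization domain Ω₂. -/

import Mathlib

open PowerSeries Finset

/-- `Ω₂ = 𝔽_p[[T,U]]`, realized as `(𝔽_p[[U]])[[T]]` with `T` the outer variable. -/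
abbrev Omega2 (p : ℕ) [Fact p.Prime] : Type := PowerSeries (PowerSeries (ZMod p))

/-- The binomial power series `(1+T)^a ∈ 𝔽_p[[T,U]]` for `a ∈ ℤ_p`, with coefficients the
binomial coefficients `C(a,n) ∈ ℤ_p` reduced mod `p`. -/
noncomputable def onePlusTPow (p : ℕ) [Fact p.Prime] (a : ℤ_[p]) : Omega2 p :=
  PowerSeries.mk fun n => PowerSeries.C (R := ZMod p) (PadicInt.toZMod (Ring.choose a n))

/-- The binomial power series `(1+U)^b ∈ 𝔽_p[[T,U]]` for `b ∈ ℤ_p`. -/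
noncomputable def onePlusUPow (p : ℕ) [Fact p.Prime] (b : ℤ_[p]) : Omega2 p :=
  PowerSeries.C (R := PowerSeries (ZMod p))
    (PowerSeries.mk fun n => PadicInt.toZMod (Ring.choose b n))

/-- `Υ_{a,b} = (1+T)^a (1+U)^b - 1 ∈ 𝔽_p[[T,U]]`. -/
noncomputable def UpsilonBar (p : ℕ) [Fact p.Prime] (a b : ℤ_[p]) : Omega2 p :=
  onePlusTPow p a * onePlusUPow p b - 1


section Conv

variable {F : Type*} [CommRing F] [IsDomain F]

/-- Double convolution of double-indexed coefficient functions. -/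
def conv2 (Z H : ℕ → ℕ → F) (n m : ℕ) : F :=
  ∑ pr ∈ antidiagonal n, ∑ q ∈ antidiagonal m, Z pr.1 q.1 * H pr.2 q.2

omit [IsDomain F] in
lemma conv2_swap (Z H : ℕ → ℕ → F) (n m : ℕ) :
    conv2 (fun i j => Z j i) (fun i j => H j i) n m = conv2 Z H m n := by
  unfold conv2
  rw [Finset.sum_comm]

lemma core_comb (Z H J : ℕ → ℕ → F) (N : ℕ)
    (h1 : ∀ n m, conv2 Z H n m = (if n = N ∧ m = 0 then 1 else 0) - J n m)
    (h2 : ∀ n m, n + m ≤ N → J n m = 0) :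
    ∃ α, (∀ i j, i + j < α → Z i j = 0) ∧ Z α 0 ≠ 0 ∧
      (∀ i j, i + j = α → j ≠ 0 → Z i j = 0) := by
  classical
  have hconvN : conv2 Z H N 0 = 1 := by
    rw [h1, h2 N 0 (by omega)]
    simp
  have hZex : {k | ∃ i j, i + j = k ∧ Z i j ≠ 0}.Nonempty := by
    by_contra hc
    rw [Set.not_nonempty_iff_eq_empty] at hc
    have hz : ∀ i j, Z i j = 0 := by
      intro i j
      by_contra hzz
      exact Set.eq_empty_iff_forall_notMem.mp hc (i + j) ⟨i, j, rfl, hzz⟩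
    have h0 : conv2 Z H N 0 = 0 :=
      Finset.sum_eq_zero fun pr _ => Finset.sum_eq_zero fun q _ => by rw [hz, zero_mul]
    rw [hconvN] at h0
    exact one_ne_zero h0
  have hHex : {k | ∃ i j, i + j = k ∧ H i j ≠ 0}.Nonempty := by
    by_contra hc
    rw [Set.not_nonempty_iff_eq_empty] at hc
    have hz : ∀ i j, H i j = 0 := by
      intro i j
      by_contra hzz
      exact Set.eq_empty_iff_forall_notMem.mp hc (i + j) ⟨i, j, rfl, hzz⟩
    have h0 : conv2 Z H N 0 = 0 :=
      Finset.sum_eq_zero fun pr _ => Finset.sum_eq_zero fun q _ => by rw [hz, mul_zero]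
    rw [hconvN] at h0
    exact one_ne_zero h0
  obtain ⟨α, ⟨iz, jz, hijz, hZne⟩, hαmin⟩ :
      ∃ α, (∃ i j, i + j = α ∧ Z i j ≠ 0) ∧
        ∀ k, (∃ i j, i + j = k ∧ Z i j ≠ 0) → α ≤ k :=
    ⟨sInf {k | ∃ i j, i + j = k ∧ Z i j ≠ 0}, Nat.sInf_mem hZex,
      fun k hk => Nat.sInf_le hk⟩
  obtain ⟨β, ⟨ihh, jh, hijh, hHne⟩, hβmin⟩ :
      ∃ β, (∃ i j, i + j = β ∧ H i j ≠ 0) ∧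
        ∀ k, (∃ i j, i + j = k ∧ H i j ≠ 0) → β ≤ k :=
    ⟨sInf {k | ∃ i j, i + j = k ∧ H i j ≠ 0}, Nat.sInf_mem hHex,
      fun k hk => Nat.sInf_le hk⟩
  have hZlow : ∀ i j, i + j < α → Z i j = 0 := by
    intro i j hlt
    by_contra hne
    have := hαmin (i + j) ⟨i, j, rfl, hne⟩
    omega
  have hHlow : ∀ i j, i + j < β → H i j = 0 := by
    intro i j hlt
    by_contra hne
    have := hβmin (i + j) ⟨i, j, rfl, hne⟩
    omega
  have hI0ex : {i | i ≤ α ∧ Z i (α - i) ≠ 0}.Nonempty :=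
    ⟨iz, by omega, by rwa [show α - iz = jz by omega]⟩
  have hI1ex : {i | i ≤ β ∧ H i (β - i) ≠ 0}.Nonempty :=
    ⟨ihh, by omega, by rwa [show β - ihh = jh by omega]⟩
  obtain ⟨i0, ⟨hi0le, hi0ne⟩, hi0minle⟩ :
      ∃ i0, (i0 ≤ α ∧ Z i0 (α - i0) ≠ 0) ∧
        ∀ i, (i ≤ α ∧ Z i (α - i) ≠ 0) → i0 ≤ i :=
    ⟨sInf {i | i ≤ α ∧ Z i (α - i) ≠ 0}, Nat.sInf_mem hI0ex,
      fun i hi => Nat.sInf_le hi⟩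
  obtain ⟨i1, ⟨hi1le, hi1ne⟩, hi1minle⟩ :
      ∃ i1, (i1 ≤ β ∧ H i1 (β - i1) ≠ 0) ∧
        ∀ i, (i ≤ β ∧ H i (β - i) ≠ 0) → i1 ≤ i :=
    ⟨sInf {i | i ≤ β ∧ H i (β - i) ≠ 0}, Nat.sInf_mem hI1ex,
      fun i hi => Nat.sInf_le hi⟩
  have hi0min : ∀ i, i < i0 → Z i (α - i) = 0 := by
    intro i hi
    by_contra hne
    have := hi0minle i ⟨by omega, hne⟩
    omega
  have hi1min : ∀ i, i < i1 → H i (β - i) = 0 := by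
    intro i hi
    by_contra hne
    have := hi1minle i ⟨by omega, hne⟩
    omega
  have hlowsum : ∀ n m, n + m < α + β → conv2 Z H n m = 0 := by
    intro n m hnm
    apply Finset.sum_eq_zero
    intro pr hp
    apply Finset.sum_eq_zero
    intro q hq
    rw [Finset.HasAntidiagonal.mem_antidiagonal] at hp hq
    by_cases hZc : pr.1 + q.1 < α
    · rw [hZlow _ _ hZc, zero_mul]
    · rw [hHlow pr.2 q.2 (by omega), mul_zero]
  have hkey : conv2 Z H (i0 + i1) ((α - i0) + (β - i1)) =
      Z i0 (α - i0) * H i1 (β - i1) := by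
    unfold conv2
    rw [Finset.sum_eq_single (i0, i1)]
    · rw [Finset.sum_eq_single (α - i0, β - i1)]
      · intro q hq hqne
        rw [Finset.HasAntidiagonal.mem_antidiagonal] at hq
        by_cases h1' : i0 + q.1 < α
        · rw [hZlow _ _ h1', zero_mul]
        · by_cases h2' : i1 + q.2 < β
          · rw [hHlow _ _ h2', mul_zero]
          · exfalso
            apply hqne
            have hq1 : q.1 = α - i0 := by omega
            have hq2 : q.2 = β - i1 := by omega
            exact Prod.ext hq1 hq2
      · intro habs
        exact absurd (Finset.HasAntidiagonal.mem_antidiagonal.mpr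
          (rfl : ((α - i0, β - i1) : ℕ × ℕ).1 + ((α - i0, β - i1) : ℕ × ℕ).2 = α - i0 + (β - i1))) habs
    · intro pr hp hpne
      rw [Finset.HasAntidiagonal.mem_antidiagonal] at hp
      apply Finset.sum_eq_zero
      intro q hq
      rw [Finset.HasAntidiagonal.mem_antidiagonal] at hq
      rcases lt_trichotomy pr.1 i0 with hlt | heq | hgt
      · by_cases h1' : pr.1 + q.1 < α
        · rw [hZlow _ _ h1', zero_mul]
        · by_cases h2' : pr.2 + q.2 < β
          · rw [hHlow _ _ h2', mul_zero]
          · have hq1 : q.1 = α - pr.1 := by omega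
            rw [hq1, hi0min pr.1 hlt, zero_mul]
      · exfalso
        apply hpne
        have hp2 : pr.2 = i1 := by omega
        exact Prod.ext heq hp2
      · by_cases h1' : pr.1 + q.1 < α
        · rw [hZlow _ _ h1', zero_mul]
        · by_cases h2' : pr.2 + q.2 < β
          · rw [hHlow _ _ h2', mul_zero]
          · have hq2 : q.2 = β - pr.2 := by omega
            rw [hq2, hi1min pr.2 (by omega), mul_zero]
    · intro habs
      exact absurd (Finset.HasAntidiagonal.mem_antidiagonal.mpr
        (rfl : ((i0, i1) : ℕ × ℕ).1 + ((i0, i1) : ℕ × ℕ).2 = i0 + i1)) habs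
  have hsingle_ne : Z i0 (α - i0) * H i1 (β - i1) ≠ 0 := mul_ne_zero hi0ne hi1ne
  by_cases hcase : α + β ≤ N
  · have h3 := h1 (i0 + i1) ((α - i0) + (β - i1))
    rw [hkey, h2 _ _ (by omega), sub_zero] at h3
    by_cases hspot : i0 + i1 = N ∧ (α - i0) + (β - i1) = 0
    · have hi0α : i0 = α := by omega
      refine ⟨α, hZlow, ?_, ?_⟩
      · have h00 : α - i0 = 0 := by omega
        rw [← hi0α, ← h00]
        exact hi0ne
      · intro i j hij hjne
        have hilt : i < i0 := by omega
        have hj : j = α - i := by omega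
        rw [hj]
        exact hi0min i hilt
    · rw [if_neg hspot] at h3
      exact absurd h3 hsingle_ne
  · exfalso
    have h0 := hlowsum N 0 (by omega)
    rw [hconvN] at h0
    exact one_ne_zero h0

lemma pincer (Z H H' J J' : ℕ → ℕ → F) (N : ℕ)
    (h1 : ∀ n m, conv2 Z H n m = (if n = N ∧ m = 0 then 1 else 0) - J n m)
    (h2 : ∀ n m, n + m ≤ N → J n m = 0)
    (h1' : ∀ n m, conv2 Z H' n m = (if n = 0 ∧ m = N then 1 else 0) - J' n m)
    (h2' : ∀ n m, n + m ≤ N → J' n m = 0)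
    (h0 : Z 0 0 = 0) : False := by
  obtain ⟨α, hlow, hne, hvan⟩ := core_comb Z H J N h1 h2
  obtain ⟨α', hlow', hne', hvan'⟩ :=
    core_comb (fun i j => Z j i) (fun i j => H' j i) (fun i j => J' j i) N
      (by
        intro n m
        rw [conv2_swap, h1' m n]
        congr 1
        simp [and_comm])
      (by
        intro n m h
        exact h2' m n (by omega))
  have hαα' : α = α' := by
    rcases lt_trichotomy α α' with h | h | h
    · exact absurd (hlow' 0 α (by omega)) hne
    · exact h
    · exact absurd (hlow 0 α' (by omega)) hne'
  have hαpos : α ≠ 0 := fun h => hne (by rw [h]; exact h0)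
  have hzero : Z α' 0 = 0 := hvan' 0 α' (by omega) (by omega)
  exact hne (by rw [hαα']; exact hzero)

end Conv

namespace Stmt5

variable (p : ℕ) [hp : Fact p.Prime]

/-- `(1+X)^a ∈ 𝔽_p[[X]]` for `a ∈ ℤ_p`. -/
noncomputable def phi (a : ℤ_[p]) : PowerSeries (ZMod p) :=
  PowerSeries.mk fun n => PadicInt.toZMod (Ring.choose a n)

lemma phi_mul (a b : ℤ_[p]) : phi p (a + b) = phi p a * phi p b := by
  ext n
  rw [coeff_mul]
  simp only [phi, coeff_mk]
  rw [Ring.add_choose_eq n (Commute.all a b), map_sum]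
  exact Finset.sum_congr rfl fun q _ => map_mul _ _ _

lemma phi_zero : phi p 0 = 1 := by
  ext n
  simp only [phi, coeff_mk, coeff_one]
  rw [Ring.choose_zero_ite]
  split_ifs <;> simp

lemma phi_one : phi p 1 = 1 + X := by
  ext n
  simp only [phi, coeff_mk, map_add, coeff_one, coeff_X]
  have h1 : (1 : ℤ_[p]) = ((1 : ℕ) : ℤ_[p]) := by norm_num
  rw [h1, Ring.choose_natCast, map_natCast]
  rcases n with _ | _ | n
  · simp
  · simp
  · rw [Nat.choose_eq_zero_of_lt (by omega)]
    simp

lemma phi_nat (n : ℕ) : phi p (n : ℤ_[p]) = (1 + X) ^ n := by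
  induction n with
  | zero => rw [Nat.cast_zero, phi_zero, pow_zero]
  | succ n ih =>
    rw [Nat.cast_succ, phi_mul, ih, phi_one, pow_succ]

instance charP_ps : CharP (PowerSeries (ZMod p)) p := ⟨fun x => by
    rw [← map_natCast (C (R := ZMod p)) x]
    constructor
    · intro h
      have h2 := congrArg (constantCoeff (R := ZMod p)) h
      simp only [constantCoeff_C, map_zero] at h2
      exact (ZMod.natCast_eq_zero_iff x p).mp h2
    · intro h
      rw [(ZMod.natCast_eq_zero_iff x p).mpr h, map_zero]⟩

lemma phi_pow_p (v : ℕ) : phi p ((p ^ v : ℕ) : ℤ_[p]) = 1 + X ^ (p ^ v) := by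
  rw [phi_nat, add_pow_char_pow, one_pow]

lemma toZMod_choose_zero {n : ℕ} (u : ℤ_[p]) {m : ℕ} (hm0 : 0 < m) (hmp : m < p ^ n) :
    PadicInt.toZMod (Ring.choose ((p : ℤ_[p]) ^ n * u) m) = 0 := by
  have hid := Ring.choose_smul_choose ((p : ℤ_[p]) ^ n * u) (n := m) (k := 1) hm0
  rw [Nat.choose_one_right, Ring.choose_one_right, nsmul_eq_mul, Nat.cast_one] at hid
  set j := m.factorization p with hj
  have hsj : p ^ j * (m / p ^ j) = m := Nat.ordProj_mul_ordCompl_eq_self m p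
  set s := m / p ^ j with hs
  have hs_nd : ¬ p ∣ s := Nat.not_dvd_ordCompl hp.out hm0.ne'
  have hjn : j < n := by
    by_contra hjge
    have hdvd : p ^ n ∣ m :=
      (Nat.Prime.pow_dvd_iff_le_factorization hp.out hm0.ne').mpr (by omega)
    have := Nat.le_of_dvd hm0 hdvd
    omega
  have hcast : ((m : ℕ) : ℤ_[p]) = (p : ℤ_[p]) ^ j * (s : ℤ_[p]) := by
    rw [← hsj]
    push_cast
    ring
  rw [hcast] at hid
  have hpowsplit : (p : ℤ_[p]) ^ n = (p : ℤ_[p]) ^ j * (p : ℤ_[p]) ^ (n - j) := by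
    rw [← pow_add]
    congr 1
    omega
  have hpne : ((p : ℤ_[p])) ^ j ≠ 0 :=
    pow_ne_zero _ (Nat.cast_ne_zero.mpr hp.out.ne_zero)
  have hcancel : (s : ℤ_[p]) * Ring.choose ((p : ℤ_[p]) ^ n * u) m =
      (p : ℤ_[p]) ^ (n - j) *
        (u * Ring.choose ((p : ℤ_[p]) ^ n * u - 1) (m - 1)) := by
    apply mul_left_cancel₀ hpne
    rw [← mul_assoc]
    linear_combination hid + u * Ring.choose ((p : ℤ_[p]) ^ n * u - 1) (m - 1) * hpowsplit
  have happ := congrArg PadicInt.toZMod hcancel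
  rw [map_mul, map_mul, map_pow, map_natCast] at happ
  have htp : PadicInt.toZMod ((p : ℤ_[p])) = 0 := by
    have hcp : ((p : ℕ) : ℤ_[p]) = (p : ℤ_[p]) := by norm_cast
    rw [← hcp, map_natCast]
    exact ZMod.natCast_self p
  rw [htp, zero_pow (by omega : n - j ≠ 0), zero_mul] at happ
  have hsne : ((s : ℕ) : ZMod p) ≠ 0 := fun h =>
    hs_nd ((ZMod.natCast_eq_zero_iff s p).mp h)
  rcases mul_eq_zero.mp happ with h | h
  · exact absurd h hsne
  · exact h

lemma phi_sub_one_dvd (n : ℕ) (u : ℤ_[p]) :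
    (X : PowerSeries (ZMod p)) ^ (p ^ n) ∣ phi p ((p : ℤ_[p]) ^ n * u) - 1 := by
  rw [X_pow_dvd_iff]
  intro m hm
  simp only [phi, map_sub, coeff_mk, coeff_one]
  rcases Nat.eq_zero_or_pos m with hm0 | hm0
  · subst hm0
    rw [Ring.choose_zero_right]
    simp
  · rw [toZMod_choose_zero p u hm0 hm, if_neg hm0.ne']
    simp



section Bridge

variable (p : ℕ) [hp : Fact p.Prime]

/-- Double coefficient extraction from `Ω₂`. -/
noncomputable def dd (f : Omega2 p) (n m : ℕ) : ZMod p :=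
  coeff (R := ZMod p) m (coeff (R := PowerSeries (ZMod p)) n f)

lemma dd_mul (f g : Omega2 p) (n m : ℕ) :
    dd p (f * g) n m = conv2 (dd p f) (dd p g) n m := by
  unfold dd conv2
  rw [coeff_mul, map_sum]
  exact Finset.sum_congr rfl fun q _ => by rw [coeff_mul]

lemma dd_sub (f g : Omega2 p) (n m : ℕ) :
    dd p (f - g) n m = dd p f n m - dd p g n m := by
  unfold dd
  rw [map_sub, map_sub]

lemma dd_add (f g : Omega2 p) (n m : ℕ) :
    dd p (f + g) n m = dd p f n m + dd p g n m := by
  unfold dd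
  rw [map_add, map_add]

lemma dd_Xpow (N n m : ℕ) :
    dd p ((X : Omega2 p) ^ N) n m = if n = N ∧ m = 0 then 1 else 0 := by
  unfold dd
  rw [coeff_X_pow]
  by_cases hn : n = N
  · rw [if_pos hn, coeff_one]
    by_cases hm : m = 0 <;> simp [hn, hm]
  · rw [if_neg hn, map_zero, if_neg (by tauto)]

lemma dd_CXpow (N n m : ℕ) :
    dd p ((C (R := PowerSeries (ZMod p)) ((X : PowerSeries (ZMod p)) ^ N)) : Omega2 p) n m =
      if n = 0 ∧ m = N then 1 else 0 := by
  unfold dd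
  rw [coeff_C]
  by_cases hn : n = 0
  · rw [if_pos hn, coeff_X_pow]
    by_cases hm : m = N <;> simp [hn, hm]
  · rw [if_neg hn, map_zero, if_neg (by tauto)]

lemma dd_Xpow_mul (K : ℕ) (w : Omega2 p) {n m : ℕ} (hn : n < K) :
    dd p ((X : Omega2 p) ^ K * w) n m = 0 := by
  unfold dd
  rw [(X_pow_dvd_iff.mp (dvd_mul_right _ w)) n hn, map_zero]

lemma dd_CXpow_mul (K : ℕ) (w : Omega2 p) {n m : ℕ} (hm : m < K) :
    dd p ((C (R := PowerSeries (ZMod p)) ((X : PowerSeries (ZMod p)) ^ K)) * w) n m = 0 := by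
  unfold dd
  rw [coeff_C_mul]
  exact (X_pow_dvd_iff.mp (dvd_mul_right _ _)) m hm

lemma A_eq (a : ℤ_[p]) :
    onePlusTPow p a = PowerSeries.map (C (R := ZMod p)) (phi p a) := by
  ext n
  rw [coeff_map]
  simp [onePlusTPow, phi, coeff_mk]

lemma B_eq (b : ℤ_[p]) :
    onePlusUPow p b = C (R := PowerSeries (ZMod p)) (phi p b) := rfl

lemma A_mul (x y : ℤ_[p]) :
    onePlusTPow p (x + y) = onePlusTPow p x * onePlusTPow p y := by
  rw [A_eq, A_eq, A_eq, phi_mul, map_mul]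

lemma B_mul (x y : ℤ_[p]) :
    onePlusUPow p (x + y) = onePlusUPow p x * onePlusUPow p y := by
  rw [B_eq, B_eq, B_eq, phi_mul, map_mul]

/-- `G(x,y) = (1+T)^x (1+U)^y`. -/
noncomputable def Gf (x y : ℤ_[p]) : Omega2 p :=
  onePlusTPow p x * onePlusUPow p y

lemma Gf_def (x y : ℤ_[p]) : Gf p x y = onePlusTPow p x * onePlusUPow p y := rfl

lemma G_add (x y x' y' : ℤ_[p]) :
    Gf p (x + x') (y + y') = Gf p x y * Gf p x' y' := by
  unfold Gf
  rw [A_mul, B_mul]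
  ring

lemma G_zero : Gf p 0 0 = 1 := by
  unfold Gf
  rw [A_eq, B_eq, phi_zero, map_one, map_one, mul_one]

lemma dvd_G_add (z : Omega2 p) {x y x' y' : ℤ_[p]}
    (h1 : z ∣ Gf p x y - 1) (h2 : z ∣ Gf p x' y' - 1) :
    z ∣ Gf p (x + x') (y + y') - 1 := by
  have he : Gf p (x + x') (y + y') - 1 =
      Gf p x y * (Gf p x' y' - 1) + (Gf p x y - 1) := by
    rw [G_add]
    ring
  rw [he]
  exact dvd_add (h2.mul_left _) h1

lemma dvd_G_neg (z : Omega2 p) {x y : ℤ_[p]} (h : z ∣ Gf p x y - 1) :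
    z ∣ Gf p (-x) (-y) - 1 := by
  have hinv : Gf p (-x) (-y) * Gf p x y = 1 := by
    rw [← G_add, neg_add_cancel, neg_add_cancel, G_zero]
  have he : Gf p (-x) (-y) - 1 = -Gf p (-x) (-y) * (Gf p x y - 1) := by
    rw [neg_mul, mul_sub, hinv, mul_one]
    ring
  rw [he]
  exact h.mul_left _

lemma dvd_G_int (z : Omega2 p) {x y : ℤ_[p]} (h : z ∣ Gf p x y - 1) (m : ℤ) :
    z ∣ Gf p ((m : ℤ_[p]) * x) ((m : ℤ_[p]) * y) - 1 := by
  induction m using Int.induction_on with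
  | zero =>
    rw [show ((0 : ℤ) : ℤ_[p]) * x = 0 by push_cast; ring,
      show ((0 : ℤ) : ℤ_[p]) * y = 0 by push_cast; ring, G_zero, sub_self]
    exact dvd_zero z
  | succ k ih =>
    rw [show ((k + 1 : ℤ) : ℤ_[p]) * x = ((k : ℤ) : ℤ_[p]) * x + x by push_cast; ring,
      show ((k + 1 : ℤ) : ℤ_[p]) * y = ((k : ℤ) : ℤ_[p]) * y + y by push_cast; ring]
    exact dvd_G_add p z ih h
  | pred k ih =>
    rw [show ((-k - 1 : ℤ) : ℤ_[p]) * x = ((-k : ℤ) : ℤ_[p]) * x + -x by push_cast; ring,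
      show ((-k - 1 : ℤ) : ℤ_[p]) * y = ((-k : ℤ) : ℤ_[p]) * y + -y by push_cast; ring]
    exact dvd_G_add p z ih (dvd_G_neg p z h)

lemma reach (z : Omega2 p) {a b c d : ℤ_[p]}
    (hz1 : z ∣ Gf p a b - 1) (hz2 : z ∣ Gf p c d - 1)
    (x y e f : ℤ_[p]) (he : x * a + y * c = e) (hf : x * b + y * d = f) (K : ℕ) :
    ∃ g1 g2 : Omega2 p,
      z ∣ (Gf p e f - 1) -
        ((X : Omega2 p) ^ (p ^ K) * g1 +
          C (R := PowerSeries (ZMod p)) ((X : PowerSeries (ZMod p)) ^ (p ^ K)) * g2) := by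
  set xK := x.appr K with hxK
  set yK := y.appr K with hyK
  have hdx : (p : ℤ_[p]) ^ K ∣ ((xK : ℤ_[p]) - x) :=
    dvd_sub_comm.mp (Ideal.mem_span_singleton.mp (PadicInt.appr_spec K x))
  have hdy : (p : ℤ_[p]) ^ K ∣ ((yK : ℤ_[p]) - y) :=
    dvd_sub_comm.mp (Ideal.mem_span_singleton.mp (PadicInt.appr_spec K y))
  obtain ⟨t1, ht1⟩ : (p : ℤ_[p]) ^ K ∣ (((xK : ℤ_[p]) - x) * a + ((yK : ℤ_[p]) - y) * c) :=
    dvd_add (hdx.mul_right a) (hdy.mul_right c)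
  obtain ⟨t2, ht2⟩ : (p : ℤ_[p]) ^ K ∣ (((xK : ℤ_[p]) - x) * b + ((yK : ℤ_[p]) - y) * d) :=
    dvd_add (hdx.mul_right b) (hdy.mul_right d)
  have he' : (xK : ℤ_[p]) * a + (yK : ℤ_[p]) * c = e + (p : ℤ_[p]) ^ K * t1 := by
    rw [← he]
    linear_combination ht1
  have hf' : (xK : ℤ_[p]) * b + (yK : ℤ_[p]) * d = f + (p : ℤ_[p]) ^ K * t2 := by
    rw [← hf]
    linear_combination ht2
  have hcomb : z ∣ Gf p ((xK : ℤ_[p]) * a + (yK : ℤ_[p]) * c)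
      ((xK : ℤ_[p]) * b + (yK : ℤ_[p]) * d) - 1 := by
    have h1 := dvd_G_int p z hz1 (xK : ℤ)
    have h2 := dvd_G_int p z hz2 (yK : ℤ)
    rw [show (((xK : ℕ) : ℤ) : ℤ_[p]) * a = (xK : ℤ_[p]) * a by push_cast; ring,
      show (((xK : ℕ) : ℤ) : ℤ_[p]) * b = (xK : ℤ_[p]) * b by push_cast; ring] at h1
    rw [show (((yK : ℕ) : ℤ) : ℤ_[p]) * c = (yK : ℤ_[p]) * c by push_cast; ring,
      show (((yK : ℕ) : ℤ) : ℤ_[p]) * d = (yK : ℤ_[p]) * d by push_cast; ring] at h2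
    exact dvd_G_add p z h1 h2
  rw [he', hf'] at hcomb
  obtain ⟨g, hg⟩ := phi_sub_one_dvd p K t1
  obtain ⟨g', hg'⟩ := phi_sub_one_dvd p K t2
  have hA : onePlusTPow p ((p : ℤ_[p]) ^ K * t1) =
      1 + (X : Omega2 p) ^ (p ^ K) * PowerSeries.map (C (R := ZMod p)) g := by
    rw [A_eq]
    have hphi : phi p ((p : ℤ_[p]) ^ K * t1) = 1 + X ^ (p ^ K) * g := by
      rw [← hg]
      ring
    rw [hphi, map_add, map_one, map_mul, map_pow, PowerSeries.map_X]
  have hB : onePlusUPow p ((p : ℤ_[p]) ^ K * t2) =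
      1 + C (R := PowerSeries (ZMod p)) ((X : PowerSeries (ZMod p)) ^ (p ^ K)) *
        C (R := PowerSeries (ZMod p)) g' := by
    rw [B_eq]
    have hphi : phi p ((p : ℤ_[p]) ^ K * t2) = 1 + X ^ (p ^ K) * g' := by
      rw [← hg']
      ring
    rw [hphi, map_add, map_one, map_mul, map_pow]
  refine ⟨-(Gf p e f * (PowerSeries.map (C (R := ZMod p)) g *
      (1 + C (R := PowerSeries (ZMod p)) ((X : PowerSeries (ZMod p)) ^ (p ^ K)) *
        C (R := PowerSeries (ZMod p)) g'))),
    -(Gf p e f * C (R := PowerSeries (ZMod p)) g'), ?_⟩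
  have hfinal : (Gf p e f - 1) -
      ((X : Omega2 p) ^ (p ^ K) * (-(Gf p e f * (PowerSeries.map (C (R := ZMod p)) g *
          (1 + C (R := PowerSeries (ZMod p)) ((X : PowerSeries (ZMod p)) ^ (p ^ K)) *
            C (R := PowerSeries (ZMod p)) g')))) +
        C (R := PowerSeries (ZMod p)) ((X : PowerSeries (ZMod p)) ^ (p ^ K)) *
          (-(Gf p e f * C (R := PowerSeries (ZMod p)) g'))) =
      Gf p (e + (p : ℤ_[p]) ^ K * t1) (f + (p : ℤ_[p]) ^ K * t2) - 1 := by
    rw [G_add, Gf_def p ((p : ℤ_[p]) ^ K * t1), hA, hB]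
    ring
  rw [hfinal]
  exact hcomb

end Bridge

end Stmt5

/-- If `(a,b)` and `(c,d)` are primitive vectors in `ℤ_p²` representing distinct classes
in `ℙ¹(ℤ_p)` (i.e. `ad - bc ≠ 0`), then `Υ_{a,b}` and `Υ_{c,d}` are relatively prime
elements of the UFD `𝔽_p[[T,U]]`. -/
theorem stmt_5 (p : ℕ) [Fact p.Prime] (a b c d : ℤ_[p])
    (hab : ¬((p : ℤ_[p]) ∣ a ∧ (p : ℤ_[p]) ∣ b))
    (hcd : ¬((p : ℤ_[p]) ∣ c ∧ (p : ℤ_[p]) ∣ d))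
    (hdist : a * d - b * c ≠ 0) :
    IsRelPrime (UpsilonBar p a b) (UpsilonBar p c d) := by
  intro z hz1 hz2
  by_contra hzu
  have hz1' : z ∣ Stmt5.Gf p a b - 1 := hz1
  have hz2' : z ∣ Stmt5.Gf p c d - 1 := hz2
  set v := ((a * d - b * c).valuation) with hv
  set u := PadicInt.unitCoeff hdist with hudef
  have hu : a * d - b * c = (u : ℤ_[p]) * (p : ℤ_[p]) ^ v := PadicInt.unitCoeff_spec hdist
  have h1 : (↑u⁻¹ : ℤ_[p]) * (a * d - b * c) = (p : ℤ_[p]) ^ v := by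
    rw [hu, ← mul_assoc, Units.inv_mul, one_mul]
  have hTe : (↑u⁻¹ : ℤ_[p]) * d * a + (-((↑u⁻¹ : ℤ_[p]) * b)) * c = (p : ℤ_[p]) ^ v := by
    linear_combination h1
  have hTf : (↑u⁻¹ : ℤ_[p]) * d * b + (-((↑u⁻¹ : ℤ_[p]) * b)) * d = 0 := by ring
  have hUe : (-((↑u⁻¹ : ℤ_[p]) * c)) * a + ((↑u⁻¹ : ℤ_[p]) * a) * c = 0 := by ring
  have hUf : (-((↑u⁻¹ : ℤ_[p]) * c)) * b + ((↑u⁻¹ : ℤ_[p]) * a) * d = (p : ℤ_[p]) ^ v := by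
    linear_combination h1
  obtain ⟨g1, g2, hdvd1⟩ := Stmt5.reach p z hz1' hz2' _ _ _ _ hTe hTf (v + 1)
  obtain ⟨g1', g2', hdvd2⟩ := Stmt5.reach p z hz1' hz2' _ _ _ _ hUe hUf (v + 1)
  have hc : ((p : ℤ_[p])) ^ v = ((p ^ v : ℕ) : ℤ_[p]) := by push_cast; ring
  have hGT : Stmt5.Gf p ((p : ℤ_[p]) ^ v) 0 - 1 = (X : Omega2 p) ^ (p ^ v) := by
    rw [Stmt5.Gf_def, Stmt5.B_eq, Stmt5.phi_zero, map_one, mul_one, Stmt5.A_eq, hc,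
      Stmt5.phi_pow_p, map_add, map_one, map_pow, PowerSeries.map_X]
    ring
  have hGU : Stmt5.Gf p 0 ((p : ℤ_[p]) ^ v) - 1 =
      C (R := PowerSeries (ZMod p)) ((X : PowerSeries (ZMod p)) ^ (p ^ v)) := by
    rw [Stmt5.Gf_def, Stmt5.A_eq, Stmt5.phi_zero, map_one, one_mul, Stmt5.B_eq, hc,
      Stmt5.phi_pow_p, map_add, map_one, map_pow]
    ring
  rw [hGT] at hdvd1
  rw [hGU] at hdvd2
  obtain ⟨h1w, hh1⟩ := hdvd1
  obtain ⟨h2w, hh2⟩ := hdvd2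
  have hNK : p ^ v < p ^ (v + 1) := Nat.pow_lt_pow_succ (Fact.out : p.Prime).one_lt
  have H1 : ∀ n m, conv2 (Stmt5.dd p z) (Stmt5.dd p h1w) n m =
      (if n = p ^ v ∧ m = 0 then 1 else 0) -
        Stmt5.dd p ((X : Omega2 p) ^ (p ^ (v + 1)) * g1 +
          C (R := PowerSeries (ZMod p)) ((X : PowerSeries (ZMod p)) ^ (p ^ (v + 1))) * g2) n m := by
    intro n m
    rw [← Stmt5.dd_mul, ← hh1, Stmt5.dd_sub, Stmt5.dd_Xpow]
  have H2 : ∀ n m, n + m ≤ p ^ v →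
      Stmt5.dd p ((X : Omega2 p) ^ (p ^ (v + 1)) * g1 +
        C (R := PowerSeries (ZMod p)) ((X : PowerSeries (ZMod p)) ^ (p ^ (v + 1))) * g2) n m = 0 := by
    intro n m hnm
    rw [Stmt5.dd_add, Stmt5.dd_Xpow_mul p _ _ (by omega),
      Stmt5.dd_CXpow_mul p _ _ (by omega), add_zero]
  have H1' : ∀ n m, conv2 (Stmt5.dd p z) (Stmt5.dd p h2w) n m =
      (if n = 0 ∧ m = p ^ v then 1 else 0) -
        Stmt5.dd p ((X : Omega2 p) ^ (p ^ (v + 1)) * g1' +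
          C (R := PowerSeries (ZMod p)) ((X : PowerSeries (ZMod p)) ^ (p ^ (v + 1))) * g2') n m := by
    intro n m
    rw [← Stmt5.dd_mul, ← hh2, Stmt5.dd_sub, Stmt5.dd_add, Stmt5.dd_CXpow]
  have H2' : ∀ n m, n + m ≤ p ^ v →
      Stmt5.dd p ((X : Omega2 p) ^ (p ^ (v + 1)) * g1' +
        C (R := PowerSeries (ZMod p)) ((X : PowerSeries (ZMod p)) ^ (p ^ (v + 1))) * g2') n m = 0 := by
    intro n m hnm
    rw [Stmt5.dd_add, Stmt5.dd_Xpow_mul p _ _ (by omega),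
      Stmt5.dd_CXpow_mul p _ _ (by omega), add_zero]
  have H0 : Stmt5.dd p z 0 0 = 0 := by
    by_contra h00
    apply hzu
    rw [PowerSeries.isUnit_iff_constantCoeff, PowerSeries.isUnit_iff_constantCoeff]
    apply isUnit_iff_ne_zero.mpr
    intro hc0
    apply h00
    unfold Stmt5.dd
    rw [coeff_zero_eq_constantCoeff_apply, coeff_zero_eq_constantCoeff_apply]
    exact hc0
  exact pincer (Stmt5.dd p z) (Stmt5.dd p h1w) (Stmt5.dd p h2w) _ _ (p ^ v) H1 H2 H1' H2' H0
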